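/- Let n ≥ 1, let A0 ∈ ℝ^{n×n}, B0, E0 ∈ ℝ^{n×1}, C0 ∈ ℝ^{1×n}. Assume (A0, C0) is observable, assume the augmented pair (A, C) with A = [[A0, E0], [0_{1×n}, 1]] and C = [C0, 0] is observable, and assume there exists z ∈ ℂ for which the matrix [[A0 − z·I_n, E0], [C0, 0]] has rank strictly less than n+1 (i.e., (A0, E0, C0) has an invariant zero). Let L ∈ ℝ^{n+1} be any gain with charpoly(A − L·C) = X^{n+1}. Then it is NOT the case that for all f : ℕ → ℝ, u : ℕ → ℝ, x : ℕ → ℝ^n with x(k+1) = A0 x(k) + B0 u(k) + E0 f(k), and all X̂ : ℕ → ℝ^{n+1} with X̂(k+1) = A X̂(k) + B u(k) + L (C0 x(k) − C X̂(k)), the last component f̂(k) of X̂(k) equals f(k−n−1) for every k ≥ n+2. In other words, there exist such f, u, x, X̂ and some k ≥ n+2 with f̂(k) ≠ f(k−n−1). -/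

import Mathlib

open Matrix

/-- The observability matrix of the pair `(M, c)`: rows `c, c*M, …, c*M^(m-1)`. -/
noncomputable def obsMat {m : ℕ} (M : Matrix (Fin m) (Fin m) ℝ)
    (c : Matrix (Fin 1) (Fin m) ℝ) : Matrix (Fin m) (Fin m) ℝ :=
  Matrix.of fun i j => (c * M ^ (i : ℕ)) 0 j

/-- The Rosenbrock system matrix `[[A0 - z I, E0], [C0, 0]]` with entries coerced to `ℂ`. -/
noncomputable def rosenbrock (n : ℕ) (A0 : Matrix (Fin n) (Fin n) ℝ)
    (E0 : Matrix (Fin n) (Fin 1) ℝ) (C0 : Matrix (Fin 1) (Fin n) ℝ) (z : ℂ) :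
    Matrix (Fin n ⊕ Fin 1) (Fin n ⊕ Fin 1) ℂ :=
  Matrix.fromBlocks (A0.map Complex.ofReal - z • 1) (E0.map Complex.ofReal)
    (C0.map Complex.ofReal) 0

/-- The augmented system matrix `A = [[A0, E0], [0, 1]]` of size `(n+1) × (n+1)`. -/
noncomputable def augA (n : ℕ) (A0 : Matrix (Fin n) (Fin n) ℝ)
    (E0 : Matrix (Fin n) (Fin 1) ℝ) : Matrix (Fin (n + 1)) (Fin (n + 1)) ℝ :=
  Matrix.of fun i j =>
    if hi : (i : ℕ) < n then
      if hj : (j : ℕ) < n then A0 ⟨i, hi⟩ ⟨j, hj⟩ else E0 ⟨i, hi⟩ 0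
    else
      if (j : ℕ) < n then 0 else 1

/-- The augmented output matrix `C = [C0, 0]` of size `1 × (n+1)`. -/
noncomputable def augC (n : ℕ) (C0 : Matrix (Fin 1) (Fin n) ℝ) :
    Matrix (Fin 1) (Fin (n + 1)) ℝ :=
  Matrix.of fun i j => if hj : (j : ℕ) < n then C0 i ⟨j, hj⟩ else 0

/-- The augmented input matrix `B = (B0; 0)` of size `(n+1) × 1`. -/
noncomputable def augB (n : ℕ) (B0 : Matrix (Fin n) (Fin 1) ℝ) :
    Matrix (Fin (n + 1)) (Fin 1) ℝ :=
  Matrix.of fun i j => if hi : (i : ℕ) < n then B0 ⟨i, hi⟩ j else 0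

section Aux

variable {n : ℕ}

/-- auxiliary: the last unit column vector. -/
noncomputable def elVec (n : ℕ) : Matrix (Fin (n + 1)) (Fin 1) ℝ :=
  Matrix.of fun i _ => if (i : ℕ) < n then 0 else 1

lemma augC_mul_el (C0 : Matrix (Fin 1) (Fin n) ℝ) : augC n C0 * elVec n = 0 := by
  ext i j
  rw [Matrix.mul_apply, Fin.sum_univ_castSucc]
  simp [augC, elVec]

lemma eigvec_zero (A0 : Matrix (Fin n) (Fin n) ℝ) (C0 : Matrix (Fin 1) (Fin n) ℝ)
    (hobs : IsUnit (obsMat A0 C0).det) (z : ℂ) (v : Fin n → ℂ)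
    (heig : ∀ i, (∑ j, (A0 i j : ℂ) * v j) = z * v i)
    (hC : (∑ j, (C0 0 j : ℂ) * v j) = 0) : v = 0 := by
  have hcoe : ⇑Complex.ofRealHom = Complex.ofReal := rfl
  have hobsC : ((obsMat A0 C0).map Complex.ofReal).det ≠ 0 := by
    have hd := (RingHom.map_det Complex.ofRealHom (obsMat A0 C0)).symm
    rw [RingHom.mapMatrix_apply, hcoe] at hd
    rw [hd]
    simpa using hobs.ne_zero
  have heig' : (A0.map Complex.ofReal).mulVec v = z • v := by
    funext i
    simpa [Matrix.mulVec, dotProduct, Matrix.map_apply] using heig i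
  have hpow : ∀ k : ℕ, ((A0.map Complex.ofReal)^k).mulVec v = z^k • v := by
    intro k; induction k with
    | zero => simp
    | succ k ih =>
      rw [pow_succ', ← Matrix.mulVec_mulVec, ih, Matrix.mulVec_smul, heig', pow_succ']
      rw [smul_smul, mul_comm]
  have hker : ((obsMat A0 C0).map Complex.ofReal).mulVec v = 0 := by
    funext i
    have hmap : ((obsMat A0 C0).map Complex.ofReal) i
        = fun j => ((C0.map Complex.ofReal) * (A0.map Complex.ofReal)^(i:ℕ)) 0 j := by
      funext j
      have hpw : (A0^(i:ℕ)).map Complex.ofReal = (A0.map Complex.ofReal)^(i:ℕ) := by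
        have := map_pow (Complex.ofRealHom.mapMatrix (m := Fin n)) A0 (i:ℕ)
        simpa [RingHom.mapMatrix_apply, hcoe] using this
      have hmm : (C0 * A0^(i:ℕ)).map Complex.ofReal
          = C0.map Complex.ofReal * (A0^(i:ℕ)).map Complex.ofReal := by
        have := Matrix.map_mul (L := C0) (M := A0^(i:ℕ)) (f := Complex.ofRealHom)
        simpa [hcoe] using this
      simp [obsMat, Matrix.map_apply]
      rw [show ((C0 * A0 ^ (i:ℕ)) 0 j : ℂ) = ((C0 * A0^(i:ℕ)).map Complex.ofReal) 0 j from rfl,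
        hmm, hpw]
    have h1 : ((obsMat A0 C0).map Complex.ofReal).mulVec v i
        = ((C0.map Complex.ofReal) * (A0.map Complex.ofReal)^(i:ℕ)).mulVec v 0 := by
      simp only [Matrix.mulVec, dotProduct]
      exact Finset.sum_congr rfl fun x _ => by rw [congrFun hmap x]
    rw [h1, ← Matrix.mulVec_mulVec, hpow, Matrix.mulVec_smul]
    have h2 : (C0.map Complex.ofReal).mulVec v 0 = 0 := by
      simpa [Matrix.mulVec, dotProduct, Matrix.map_apply] using hC
    simp [h2]
  by_contra hv
  exact hobsC ((Matrix.exists_mulVec_eq_zero_iff).mp ⟨v, hv, hker⟩)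

end Aux

theorem stmt5 (n : ℕ) (hn : 1 ≤ n)
    (A0 : Matrix (Fin n) (Fin n) ℝ) (B0 E0 : Matrix (Fin n) (Fin 1) ℝ)
    (C0 : Matrix (Fin 1) (Fin n) ℝ)
    (hobs : IsUnit (obsMat A0 C0).det)
    (hobsAug : IsUnit (obsMat (augA n A0 E0) (augC n C0)).det)
    (hzero : ∃ z : ℂ, (rosenbrock n A0 E0 C0 z).rank < n + 1)
    (L : Matrix (Fin (n + 1)) (Fin 1) ℝ)
    (hL : (augA n A0 E0 - L * augC n C0).charpoly = Polynomial.X ^ (n + 1)) :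
    ¬ (∀ (f u : ℕ → ℝ) (x : ℕ → Matrix (Fin n) (Fin 1) ℝ)
        (Xh : ℕ → Matrix (Fin (n + 1)) (Fin 1) ℝ),
        (∀ k, x (k + 1) = A0 * x k + u k • B0 + f k • E0) →
        (∀ k, Xh (k + 1) = augA n A0 E0 * Xh k + u k • augB n B0
          + ((C0 * x k) 0 0 - (augC n C0 * Xh k) 0 0) • L) →
        ∀ k, n + 2 ≤ k → Xh k (Fin.last n) 0 = f (k - (n + 1))) := by
  intro h
  classical
  obtain ⟨z, hzrank⟩ := hzero
  -- the Rosenbrock matrix is singular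
  have hdet : (rosenbrock n A0 E0 C0 z).det = 0 := by
    by_contra hd
    have hu : IsUnit (rosenbrock n A0 E0 C0 z) :=
      (Matrix.isUnit_iff_isUnit_det _).mpr (isUnit_iff_ne_zero.mpr hd)
    have hr := Matrix.rank_of_isUnit _ hu
    rw [hr] at hzrank
    simp at hzrank
  obtain ⟨V, hV0, hVk⟩ := (Matrix.exists_mulVec_eq_zero_iff).mpr hdet
  set vC : Fin n → ℂ := fun i => V (Sum.inl i) with hvC
  set wC : ℂ := V (Sum.inr 0) with hwC
  -- the two block rows of the kernel equation
  have hrow1 : ∀ i : Fin n,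
      z * vC i = (∑ j, (A0 i j : ℂ) * vC j) + (E0 i 0 : ℂ) * wC := by
    intro i
    have h1 := congrFun hVk (Sum.inl i)
    simp [rosenbrock, Matrix.mulVec, dotProduct, Fintype.sum_sum_type,
      Matrix.sub_apply, Matrix.smul_apply, Matrix.one_apply, sub_mul, mul_ite,
      Finset.sum_sub_distrib, Finset.sum_ite_eq, ite_mul] at h1
    linear_combination -h1
  have hrow2 : (∑ j, (C0 0 j : ℂ) * vC j) = 0 := by
    have h2 := congrFun hVk (Sum.inr 0)
    simpa [rosenbrock, Matrix.mulVec, dotProduct, Fintype.sum_sum_type] using h2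
  -- w ≠ 0 by observability of (A0, C0)
  have hw : wC ≠ 0 := by
    intro hw0
    have heig : ∀ i, (∑ j, (A0 i j : ℂ) * vC j) = z * vC i := by
      intro i
      rw [hrow1 i, hw0, mul_zero, add_zero]
    have hvC0 : vC = 0 := eigvec_zero A0 C0 hobs z vC heig hrow2
    apply hV0
    funext s
    cases s with
    | inl i => exact congrFun hvC0 i
    | inr j =>
      have : j = 0 := Subsingleton.elim _ _
      rw [this]
      exact hw0
  by_cases hz0 : z = 0
  · -- z = 0 : construct real vector and use nilpotency of A - L C
    set M : Matrix (Fin (n+1)) (Fin (n+1)) ℝ := augA n A0 E0 - L * augC n C0 with hMdef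
    have hMnil : M ^ (n+1) = 0 := by
      have h1 := Matrix.aeval_self_charpoly M
      rw [hL] at h1
      simpa using h1
    have hrow1' : ∀ i, (∑ j, (A0 i j:ℂ) * vC j) + (E0 i 0:ℂ) * wC = 0 := by
      intro i
      have := (hrow1 i).symm
      rw [hz0, zero_mul] at this
      exact this
    set vr : Fin n → ℝ := fun i => (wC⁻¹ * vC i).re with hvr
    have hAvr : ∀ i, (∑ j, A0 i j * vr j) + E0 i 0 = 0 := by
      intro i
      have hc : (∑ j, (A0 i j:ℂ) * (wC⁻¹ * vC j)) + (E0 i 0:ℂ) = 0 := by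
        have hkey : (∑ j, (A0 i j:ℂ) * (wC⁻¹ * vC j)) + (E0 i 0:ℂ)
            = wC⁻¹ * ((∑ j, (A0 i j:ℂ) * vC j) + (E0 i 0:ℂ) * wC) := by
          rw [mul_add, Finset.mul_sum]
          congr 1
          · exact Finset.sum_congr rfl fun j _ => by ring
          · field_simp
        rw [hkey, hrow1' i, mul_zero]
      have hre := congrArg Complex.re hc
      simpa [Complex.add_re, Complex.re_sum, Complex.re_ofReal_mul, Complex.ofReal_re,
        hvr] using hre
    have hCvr : (∑ j, C0 0 j * vr j) = 0 := by
      have hc : (∑ j, (C0 0 j:ℂ) * (wC⁻¹ * vC j)) = 0 := by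
        have hkey : (∑ j, (C0 0 j:ℂ) * (wC⁻¹ * vC j))
            = wC⁻¹ * (∑ j, (C0 0 j:ℂ) * vC j) := by
          rw [Finset.mul_sum]
          exact Finset.sum_congr rfl fun j _ => by ring
        rw [hkey, hrow2, mul_zero]
      have hre := congrArg Complex.re hc
      simpa [Complex.re_sum, Complex.re_ofReal_mul, hvr] using hre
    set Vg : Matrix (Fin (n+1)) (Fin 1) ℝ :=
      Matrix.of (fun i _ => if h : (i:ℕ) < n then vr ⟨i,h⟩ else 1) with hVg
    have hAVg : augA n A0 E0 * Vg = elVec n := by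
      ext i j
      rw [Matrix.mul_apply, Fin.sum_univ_castSucc]
      by_cases hi : (i:ℕ) < n
      · have e1 : ∀ jj : Fin n, augA n A0 E0 i jj.castSucc = A0 ⟨i, hi⟩ jj := by
          intro jj
          simp [augA, hi, Fin.eta]
        have e2 : augA n A0 E0 i (Fin.last n) = E0 ⟨i, hi⟩ 0 := by
          simp [augA, hi]
        have e3 : ∀ jj : Fin n, Vg jj.castSucc j = vr jj := by
          intro jj
          simp [hVg]
        have e4 : Vg (Fin.last n) j = (1:ℝ) := by simp [hVg]
        have e5 : elVec n i j = 0 := by simp [elVec, hi]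
        rw [e2, e4, e5, mul_one, Finset.sum_congr rfl fun jj _ => by rw [e1 jj, e3 jj]]
        exact hAvr ⟨i, hi⟩
      · simp [augA, elVec, hVg, hi]
    have hCVg : augC n C0 * Vg = 0 := by
      ext i j
      rw [Matrix.mul_apply, Fin.sum_univ_castSucc]
      have hi : i = 0 := Subsingleton.elim _ _
      subst hi
      simpa [augC, hVg] using hCvr
    have hMVg : M * Vg = elVec n := by
      rw [hMdef, Matrix.sub_mul, Matrix.mul_assoc, hCVg, Matrix.mul_zero, sub_zero, hAVg]
    have hMel : M^n * elVec n = 0 := by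
      calc M^n * elVec n = M^n * (M * Vg) := by rw [hMVg]
        _ = M^(n+1) * Vg := by rw [← Matrix.mul_assoc, ← pow_succ]
        _ = 0 := by rw [hMnil, Matrix.zero_mul]
    -- counterexample trajectory: step disturbance at time 2
    set f : ℕ → ℝ := fun k => if k ≤ 1 then 0 else 1 with hf
    set xx : ℕ → Matrix (Fin n) (Fin 1) ℝ :=
      fun k => Nat.rec 0 (fun m xm => A0 * xm + (fun _ : ℕ => (0:ℝ)) m • B0 + f m • E0) k
      with hxx
    have hx : ∀ k, xx (k+1) = A0 * xx k + (fun _:ℕ=>(0:ℝ)) k • B0 + f k • E0 := fun k => rfl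
    set Xa : ℕ → Matrix (Fin (n+1)) (Fin 1) ℝ :=
      fun k => Matrix.of (fun i _ => if h : (i:ℕ) < n then xx k ⟨i,h⟩ 0 else f k) with hXa
    set e : ℕ → Matrix (Fin (n+1)) (Fin 1) ℝ :=
      fun k => if k ≤ 1 then 0 else M^(k-2) * elVec n with he
    have hCXa : ∀ k, (augC n C0 * Xa k) 0 0 = (C0 * xx k) 0 0 := by
      intro k
      rw [Matrix.mul_apply, Fin.sum_univ_castSucc, Matrix.mul_apply]
      simp [augC, hXa]
    have hXa_rec : ∀ k, Xa (k+1) = augA n A0 E0 * Xa k + (f (k+1) - f k) • elVec n := by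
      intro k
      ext i j
      rw [Matrix.add_apply, Matrix.mul_apply, Fin.sum_univ_castSucc, Matrix.smul_apply]
      by_cases hi : (i:ℕ) < n
      · have hL1 : Xa (k+1) i j = xx (k+1) ⟨i, hi⟩ 0 := by simp [hXa, hi]
        rw [hL1, hx k]
        simp [augA, elVec, hXa, hi, Matrix.add_apply, Matrix.mul_apply, Matrix.smul_apply,
          mul_comm]
      · have hL1 : Xa (k+1) i j = f (k+1) := by simp [hXa, hi]
        rw [hL1]
        simp [augA, elVec, hXa, hi]
    have he_rec : ∀ k, e (k+1) = M * e k + (f (k+1) - f k) • elVec n := by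
      intro k
      match k with
      | 0 => simp [he, hf]
      | 1 =>
        have h2 : ¬ (2 ≤ 1) := by omega
        simp [he, hf, h2]
      | (m+2) =>
        have h1 : ¬ (m+3 ≤ 1) := by omega
        have h2 : ¬ (m+2 ≤ 1) := by omega
        have h3 : ¬ (m+3 ≤ 1) := h1
        simp only [he, if_neg h1, if_neg h2, hf]
        have hm1 : m+2+1-2 = m+1 := by omega
        have hm2 : m+2-2 = m := by omega
        rw [hm1, hm2, pow_succ', Matrix.mul_assoc]
        norm_num
    set Xh : ℕ → Matrix (Fin (n+1)) (Fin 1) ℝ := fun k => Xa k - e k with hXhdef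
    have hXhrec : ∀ k, Xh (k+1) = augA n A0 E0 * Xh k + (fun _:ℕ=>(0:ℝ)) k • augB n B0
        + ((C0 * xx k) 0 0 - (augC n C0 * Xh k) 0 0) • L := by
      intro k
      have hscal : (C0 * xx k) 0 0 - (augC n C0 * Xh k) 0 0 = (augC n C0 * e k) 0 0 := by
        have : augC n C0 * Xh k = augC n C0 * Xa k - augC n C0 * e k := by
          rw [hXhdef, Matrix.mul_sub]
        rw [this, Matrix.sub_apply, hCXa k]
        ring
      rw [hscal]
      have hLsm : ((augC n C0 * e k) 0 0) • L = L * (augC n C0 * e k) := by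
        ext i j
        have hj : j = 0 := Subsingleton.elim _ _
        subst hj
        simp [Matrix.mul_apply, Fin.sum_univ_one, mul_comm]
      have hzB : (fun _:ℕ=>(0:ℝ)) k • augB n B0 = 0 := by simp
      rw [hzB, add_zero, hLsm]
      calc Xh (k+1) = Xa (k+1) - e (k+1) := rfl
        _ = (augA n A0 E0 * Xa k + (f (k+1) - f k) • elVec n)
            - (M * e k + (f (k+1) - f k) • elVec n) := by rw [hXa_rec, he_rec]
        _ = augA n A0 E0 * Xa k - M * e k := by abel
        _ = augA n A0 E0 * Xa k - (augA n A0 E0 * e k - L * (augC n C0 * e k)) := by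
            rw [hMdef, Matrix.sub_mul, Matrix.mul_assoc]
        _ = augA n A0 E0 * (Xa k - e k) + L * (augC n C0 * e k) := by
            rw [Matrix.mul_sub]; abel
        _ = augA n A0 E0 * Xh k + L * (augC n C0 * e k) := by rw [hXhdef]
    have hfin := h f (fun _ => 0) xx Xh hx hXhrec (n+2) (by omega)
    have hen2 : e (n+2) = 0 := by
      have h1 : ¬ (n+2 ≤ 1) := by omega
      have h2 : n+2-2 = n := by omega
      simp only [he, if_neg h1, h2, hMel]
    have hXalast : Xa (n+2) (Fin.last n) 0 = f (n+2) := by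
      have : ¬ ((Fin.last n : ℕ) < n) := by simp
      simp [hXa, this]
    have hlhs : Xh (n+2) (Fin.last n) 0 = 1 := by
      rw [hXhdef]
      simp only [Matrix.sub_apply, hen2, Matrix.zero_apply, sub_zero, hXalast]
      have : ¬ (n+2 ≤ 1) := by omega
      simp [hf, this]
    have hrhs : f (n+2-(n+1)) = 0 := by
      have h12 : n+2-(n+1) = 1 := by omega
      rw [h12]
      simp [hf]
    rw [hlhs, hrhs] at hfin
    exact one_ne_zero hfin
  · -- z ≠ 0 : output-zeroing trajectory
    have hzw : z * wC ≠ 0 := mul_ne_zero hz0 hw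
    obtain ⟨p, hpzw⟩ : ∃ p : ℂ →ₗ[ℝ] ℝ, p (z * wC) ≠ 0 := by
      by_cases hre : (z * wC).re = 0
      · refine ⟨Complex.imLm, ?_⟩
        simp only [Complex.imLm_coe]
        intro him; exact hzw (Complex.ext hre him)
      · exact ⟨Complex.reLm, by simpa [Complex.reLm_coe] using hre⟩
    have hsc : ∀ (r : ℝ) (c : ℂ), p ((r:ℂ) * c) = r * p c := by
      intro r c
      rw [← Complex.real_smul, p.map_smul, smul_eq_mul]
    set f : ℕ → ℝ := fun k => p (z^k * wC) with hf
    set xx : ℕ → Matrix (Fin n) (Fin 1) ℝ :=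
      fun k => Matrix.of (fun i _ => p (z^k * vC i)) with hxx
    have hx : ∀ k, xx (k+1) = A0 * xx k + (fun _ : ℕ => (0:ℝ)) k • B0 + f k • E0 := by
      intro k
      ext i j
      have hkey : z^(k+1) * vC i
          = (∑ jj, (A0 i jj : ℂ) * (z^k * vC jj)) + (E0 i 0 : ℂ) * (z^k * wC) := by
        have : z^(k+1) * vC i = z^k * (z * vC i) := by ring
        rw [this, hrow1 i, mul_add, Finset.mul_sum]
        congr 1
        · exact Finset.sum_congr rfl fun jj _ => by ring
        · ring
      have hj : j = 0 := Subsingleton.elim _ _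
      subst hj
      show p (z^(k+1) * vC i) = _
      rw [hkey, map_add, map_sum]
      simp only [hsc]
      simp [Matrix.mul_apply, Matrix.add_apply, Matrix.smul_apply, hxx, hf, mul_comm]
    have hy : ∀ k, (C0 * xx k) 0 0 = 0 := by
      intro k
      have h2 : (∑ j, (C0 0 j : ℂ) * (z^k * vC j)) = 0 := by
        have : (∑ j, (C0 0 j : ℂ) * (z^k * vC j)) = z^k * ∑ j, (C0 0 j : ℂ) * vC j := by
          rw [Finset.mul_sum]
          exact Finset.sum_congr rfl fun jj _ => by ring
        rw [this, hrow2, mul_zero]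
      have h3 : (C0 * xx k) 0 0 = ∑ j, C0 0 j * p (z^k * vC j) := by
        simp [Matrix.mul_apply, hxx]
      rw [h3]
      have h4 : ∀ j : Fin n, C0 0 j * p (z^k * vC j) = p ((C0 0 j : ℂ) * (z^k * vC j)) :=
        fun j => (hsc _ _).symm
      rw [Finset.sum_congr rfl fun j _ => h4 j, ← map_sum, h2, map_zero]
    have hXh : ∀ k, (fun _ : ℕ => (0 : Matrix (Fin (n+1)) (Fin 1) ℝ)) (k+1)
        = augA n A0 E0 * (fun _ : ℕ => (0 : Matrix (Fin (n+1)) (Fin 1) ℝ)) k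
          + (fun _ : ℕ => (0:ℝ)) k • augB n B0
          + ((C0 * xx k) 0 0 - (augC n C0 * (fun _ : ℕ => (0 : Matrix (Fin (n+1)) (Fin 1) ℝ)) k) 0 0) • L := by
      intro k
      simp [hy k]
    have hfin := h f (fun _ => 0) xx (fun _ => 0) hx hXh (n+2) (by omega)
    have h12 : n+2-(n+1) = 1 := by omega
    rw [h12] at hfin
    apply hpzw
    have : (0:ℝ) = f 1 := hfin
    rw [hf] at this
    simpa [pow_one] using this.symm
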